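/- Let q be odd, χ a nontrivial character of (F_q,+), and ρ an irreducible complex representation of H(W), W = F_q^{2n}, with central character χ. For every Lagrangian subspace L ⊆ W (an n-dimensional subspace on which the symplectic form vanishes identically), the space of vectors v with ρ(l,0)v = v for all l ∈ L is exactly one-dimensional. -/

import Mathlib

/-!
STATEMENT 3: For an irreducible representation ρ of the Heisenberg group H(W),
W = F_q^{2n}, q odd, with nontrivial central character χ, and any Lagrangian
subspace L ⊆ W, the space of vectors fixed by ρ(l,0), l ∈ L, is exactly
one-dimensional.
-/

open Matrix

set_option linter.unusedSectionVars false

namespace Stmt3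

/-- The standard symplectic form on `W = F^n × F^n`:
`⟨(x,y),(x',y')⟩ = x·y' − y·x'`. -/
def symp {F : Type} [Field F] {n : ℕ} (u v : (Fin n → F) × (Fin n → F)) : F :=
  u.1 ⬝ᵥ v.2 - u.2 ⬝ᵥ v.1

/-- The Heisenberg group `H(W) = W ⊕ F` attached to `W = F^n × F^n`, with
product `(w,t)·(w',t') = (w + w', t + t' + ½⟨w,w'⟩)`. -/
@[ext]
structure Heis (F : Type) [Field F] (n : ℕ) where
  w : (Fin n → F) × (Fin n → F)
  t : F

namespace Heis

variable {F : Type} [Field F] {n : ℕ}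

instance : Mul (Heis F n) :=
  ⟨fun a b => ⟨a.w + b.w, a.t + b.t + (2 : F)⁻¹ * symp a.w b.w⟩⟩

instance : One (Heis F n) := ⟨⟨0, 0⟩⟩

instance : Inv (Heis F n) := ⟨fun a => ⟨-a.w, -a.t⟩⟩

lemma mul_w (a b : Heis F n) : (a * b).w = a.w + b.w := rfl
lemma mul_t (a b : Heis F n) : (a * b).t = a.t + b.t + (2 : F)⁻¹ * symp a.w b.w := rfl
lemma one_w : (1 : Heis F n).w = 0 := rfl
lemma one_t : (1 : Heis F n).t = 0 := rfl
lemma inv_w (a : Heis F n) : (a⁻¹).w = -a.w := rfl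
lemma inv_t (a : Heis F n) : (a⁻¹).t = -a.t := rfl

lemma symp_self (u : (Fin n → F) × (Fin n → F)) : symp u u = 0 := by
  simp [symp, dotProduct_comm]

instance : Group (Heis F n) where
  mul_assoc a b c := by
    refine Heis.ext ?_ ?_
    · simp [mul_w, add_assoc]
    · simp only [mul_t, mul_w, symp, Prod.fst_add, Prod.snd_add,
        add_dotProduct, dotProduct_add]
      ring
  one_mul a := by
    refine Heis.ext ?_ ?_
    · simp [mul_w, one_w]
    · simp [mul_t, one_w, one_t, symp]
  mul_one a := by
    refine Heis.ext ?_ ?_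
    · simp [mul_w, one_w]
    · simp [mul_t, one_w, one_t, symp]
  inv_mul_cancel a := by
    refine Heis.ext ?_ ?_
    · simp [mul_w, inv_w, one_w]
    · have h : symp (-a.w) a.w = 0 := by
        simp only [symp, Prod.fst_neg, Prod.snd_neg, neg_dotProduct]
        rw [dotProduct_comm]
        ring
      simp [mul_t, inv_w, inv_t, one_t, h]

end Heis

/-- A representation `ρ` of the Heisenberg group has central character `χ` if
the central element `(0,t)` acts by the scalar `χ t`. -/
def HasCentralChar {F : Type} [Field F] {n : ℕ} {V : Type} [AddCommGroup V] [Module ℂ V]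
    (ρ : Representation ℂ (Heis F n) V) (χ : AddChar F ℂ) : Prop :=
  ∀ t : F, ∀ v : V, ρ ⟨0, t⟩ v = χ t • v

/-- Irreducibility of a representation: the space is nonzero, and the only
invariant subspaces are `⊥` and `⊤`. -/
def IsIrred {G : Type} [Group G] {V : Type} [AddCommGroup V] [Module ℂ V]
    (ρ : Representation ℂ G V) : Prop :=
  (∃ v : V, v ≠ 0) ∧
    ∀ p : Submodule ℂ V, (∀ g : G, ∀ v ∈ p, ρ g v ∈ p) → p = ⊥ ∨ p = ⊤

variable {F : Type} [Field F] {n : ℕ}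

/-- The subspace of vectors fixed by all `ρ(l,0)`, `l ∈ L`. -/
def fixedByLag {V : Type} [AddCommGroup V] [Module ℂ V]
    (ρ : Representation ℂ (Heis F n) V)
    (L : Submodule F ((Fin n → F) × (Fin n → F))) : Submodule ℂ V where
  carrier := {v | ∀ l ∈ L, ρ ⟨l, 0⟩ v = v}
  add_mem' := by
    intro a b ha hb l hl
    rw [_root_.map_add, ha l hl, hb l hl]
  zero_mem' := by intro l hl; simp
  smul_mem' := by
    intro c v hv l hl
    rw [_root_.map_smul, hv l hl]


section Aux

open Matrix

variable {F : Type} [Field F] {n : ℕ}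

/-- `symp` as a bilinear form. -/
def sympBilin (F : Type) [Field F] (n : ℕ) :
    LinearMap.BilinForm F ((Fin n → F) × (Fin n → F)) :=
  LinearMap.mk₂ F (fun u v => symp u v)
    (by intro a b c; simp [symp, add_dotProduct, dotProduct_add]; ring)
    (by intro c a b; simp [symp, smul_dotProduct, dotProduct_smul, smul_eq_mul]; ring)
    (by intro a b c; simp [symp, add_dotProduct, dotProduct_add]; ring)
    (by intro c a b; simp [symp, smul_dotProduct, dotProduct_smul, smul_eq_mul]; ring)

@[simp] lemma sympBilin_apply (u v : (Fin n → F) × (Fin n → F)) :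
    sympBilin F n u v = symp u v := rfl

lemma symp_skew (u v : (Fin n → F) × (Fin n → F)) : symp u v = - symp v u := by
  simp [symp, dotProduct_comm]

lemma symp_zero_left (v : (Fin n → F) × (Fin n → F)) : symp 0 v = 0 := by
  simp [symp]

lemma symp_smul_left (c : F) (u v : (Fin n → F) × (Fin n → F)) :
    symp (c • u) v = c * symp u v := by
  simp [symp, smul_dotProduct, smul_eq_mul]; ring

lemma sympBilin_nondegenerate : (sympBilin F n).Nondegenerate := by
  refine (LinearMap.IsRefl.nondegenerate_iff_separatingLeft
    (by intro u v h; simp only [sympBilin_apply] at *; rw [symp_skew, h, neg_zero])).mpr ?_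
  intro u hu
  ext i
  · have := hu (0, Pi.single i 1)
    simpa [symp, dotProduct_single] using this
  · have := hu (Pi.single i 1, 0)
    simp only [sympBilin_apply, symp, dotProduct_zero, single_dotProduct, zero_sub,
      neg_eq_zero, one_mul] at this
    simpa using this

lemma sympBilin_refl : (sympBilin F n).IsRefl := by
  intro u v h
  simp only [sympBilin_apply] at *
  rw [symp_skew, h, neg_zero]

/-- A Lagrangian subspace is its own symplectic orthogonal complement. -/
lemma perp_subset (L : Submodule F ((Fin n → F) × (Fin n → F)))
    (hLdim : Module.finrank F ↥L = n)
    (hLiso : ∀ u ∈ L, ∀ v ∈ L, symp u v = 0)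
    (w : (Fin n → F) × (Fin n → F)) (hw : ∀ l ∈ L, symp l w = 0) : w ∈ L := by
  have hW : Module.finrank F ((Fin n → F) × (Fin n → F)) = n + n := by
    simp [Module.finrank_prod, Module.finrank_fin_fun]
  have hle : L ≤ (sympBilin F n).orthogonal L := by
    intro x hx
    rw [LinearMap.BilinForm.mem_orthogonal_iff]
    intro y hy
    exact hLiso y hy x hx
  have horth : Module.finrank F ((sympBilin F n).orthogonal L) = n := by
    rw [LinearMap.BilinForm.finrank_orthogonal sympBilin_nondegenerate,
      hW, hLdim]
    omega
  have : L = (sympBilin F n).orthogonal L :=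
    Submodule.eq_of_le_of_finrank_le hle (by rw [horth, hLdim])
  rw [this, LinearMap.BilinForm.mem_orthogonal_iff]
  intro y hy
  exact hw y hy

/-- The fundamental commutation rule in the Heisenberg group. -/
lemma heis_comm (h2 : (2 : F) ≠ 0) (l w : (Fin n → F) × (Fin n → F)) (t : F) :
    (⟨l, 0⟩ : Heis F n) * ⟨w, t⟩ = ⟨0, symp l w⟩ * (⟨w, t⟩ * ⟨l, 0⟩) := by
  refine Heis.ext ?_ ?_
  · simp [Heis.mul_w]; abel
  · simp only [Heis.mul_t, Heis.mul_w]
    rw [symp_skew w l, symp_zero_left]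
    field_simp
    ring

lemma heis_mul_lag (a b : (Fin n → F) × (Fin n → F)) (h : symp a b = 0) :
    (⟨a, 0⟩ : Heis F n) * ⟨b, 0⟩ = ⟨a + b, 0⟩ := by
  refine Heis.ext ?_ ?_
  · simp [Heis.mul_w]
  · simp [Heis.mul_t, h]

lemma heis_central_mul (t : F) (w : (Fin n → F) × (Fin n → F)) (s : F) :
    (⟨0, t⟩ : Heis F n) * ⟨w, s⟩ = ⟨w, t + s⟩ := by
  refine Heis.ext ?_ ?_
  · simp [Heis.mul_w]
  · simp [Heis.mul_t, symp_zero_left]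

lemma mem_fixedByLag {V : Type} [AddCommGroup V] [Module ℂ V]
    (ρ : Representation ℂ (Heis F n) V)
    (L : Submodule F ((Fin n → F) × (Fin n → F))) (v : V) :
    v ∈ fixedByLag ρ L ↔ ∀ l ∈ L, ρ ⟨l, 0⟩ v = v := Iff.rfl

end Aux

/-- quantization of Lagrangians (cf. §7.1): for every
Lagrangian subspace `L` of `W`, the space of `L`-fixed vectors in the
irreducible representation `ρ_χ` is one-dimensional. -/
theorem lagrangian_fixed_space_one_dimensional
    (F : Type) [Field F] [Fintype F] (hodd : Odd (Fintype.card F))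
    (n : ℕ) (χ : AddChar F ℂ) (hχ : χ ≠ 1)
    {V : Type} [AddCommGroup V] [Module ℂ V] [FiniteDimensional ℂ V]
    (ρ : Representation ℂ (Heis F n) V)
    (hirr : IsIrred ρ) (hcc : HasCentralChar ρ χ)
    (L : Submodule F ((Fin n → F) × (Fin n → F)))
    (hLdim : Module.finrank F ↥L = n)
    (hLiso : ∀ u ∈ L, ∀ v ∈ L, symp u v = 0) :
    Module.finrank ℂ ↥(fixedByLag ρ L) = 1 := by
  classical
  have h2 : (2 : F) ≠ 0 := by
    intro h
    have hdvd : ringChar F ∣ 2 := by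
      rw [← ringChar.spec F 2]
      exact_mod_cast h
    have hchar : ringChar F = 2 := by
      rcases (Nat.dvd_prime Nat.prime_two).mp hdvd with h1 | h1
      · exfalso
        have : ((1 : ℕ) : F) = 0 := (ringChar.spec F 1).mpr (h1 ▸ dvd_refl _)
        simpa using this
      · exact h1
    have := FiniteField.even_card_iff_char_two.mp hchar
    rw [Nat.odd_iff] at hodd
    omega
  haveI : Fintype ↥L := Fintype.ofFinite _
  -- central elements act by scalars
  have hcen : ∀ t : F, ρ ⟨0, t⟩ = χ t • (1 : V →ₗ[ℂ] V) := by
    intro t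
    ext v
    simpa using hcc t v
  have hsc : ∀ (w : (Fin n → F) × (Fin n → F)) (t : F),
      ρ ⟨w, t⟩ = χ t • ρ ⟨w, 0⟩ := by
    intro w t
    have : (⟨w, t⟩ : Heis F n) = ⟨0, t⟩ * ⟨w, 0⟩ := by
      rw [heis_central_mul]; simp
    rw [this, _root_.map_mul, hcen, smul_mul_assoc, one_mul]
  -- V is nontrivial
  haveI : Nontrivial V := by
    obtain ⟨v, hv⟩ := hirr.1
    exact ⟨v, 0, hv⟩
  have hd : ((Module.finrank ℂ V : ℕ) : ℂ) ≠ 0 :=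
    Nat.cast_ne_zero.mpr (Module.finrank_pos (R := ℂ) (M := V)).ne'
  -- scaling χ to get a nontrivial value
  have hchi : ∀ s : F, s ≠ 0 → ∃ c : F, χ (c * s) ≠ 1 := by
    intro s hs
    obtain ⟨x, hx⟩ := AddChar.ne_one_iff.mp hχ
    exact ⟨x / s, by rwa [div_mul_cancel₀ _ hs]⟩
  -- vanishing of traces off the centre
  have htr0 : ∀ w : (Fin n → F) × (Fin n → F), w ≠ 0 →
      LinearMap.trace ℂ V (ρ ⟨w, 0⟩) = 0 := by
    intro w hw
    have hne : ¬ ∀ v, sympBilin F n w v = 0 := fun h => hw (sympBilin_nondegenerate.1 w h)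
    push_neg at hne
    obtain ⟨vv, hvv⟩ := hne
    rw [sympBilin_apply] at hvv
    have hvv' : symp vv w ≠ 0 := by
      rw [symp_skew]
      simpa using hvv
    obtain ⟨c, hc⟩ := hchi _ hvv'
    set u := c • vv with hu
    have hcu : χ (symp u w) ≠ 1 := by rw [hu, symp_smul_left]; exact hc
    have hgrp : (⟨u, 0⟩ : Heis F n) * ⟨w, 0⟩ * (⟨u, 0⟩ : Heis F n)⁻¹
        = ⟨0, symp u w⟩ * ⟨w, 0⟩ := by
      rw [heis_comm h2, mul_assoc, mul_assoc, mul_inv_cancel, mul_one]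
    have e1 : LinearMap.trace ℂ V (ρ ((⟨u, 0⟩ : Heis F n) * ⟨w, 0⟩ * (⟨u, 0⟩ : Heis F n)⁻¹))
        = LinearMap.trace ℂ V (ρ ⟨w, 0⟩) := by
      rw [mul_assoc, _root_.map_mul, LinearMap.trace_mul_comm, ← _root_.map_mul,
        inv_mul_cancel_right]
    rw [hgrp, _root_.map_mul, hcen, smul_mul_assoc, one_mul, _root_.map_smul,
      smul_eq_mul] at e1
    have hfin : (χ (symp u w) - 1) * LinearMap.trace ℂ V (ρ ⟨w, 0⟩) = 0 := by
      rw [sub_mul, one_mul, e1, sub_self]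
    rcases mul_eq_zero.mp hfin with h | h
    · exact absurd (sub_eq_zero.mp h) hcu
    · exact h
  -- the averaging projector over L
  haveI : Nonempty ↥L := ⟨0⟩
  set Lc : ℂ := (Fintype.card ↥L : ℂ) with hLcdef
  have hLc0 : Lc ≠ 0 := Nat.cast_ne_zero.mpr Fintype.card_ne_zero
  set P : Module.End ℂ V := Lc⁻¹ • ∑ l : ↥L, ρ ⟨(l : (Fin n → F) × (Fin n → F)), 0⟩ with hP
  have hmul_lag : ∀ a b : ↥L,
      ρ ⟨(a : (Fin n → F) × (Fin n → F)), 0⟩ * ρ ⟨(b : (Fin n → F) × (Fin n → F)), 0⟩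
        = ρ ⟨((a + b : ↥L) : (Fin n → F) × (Fin n → F)), 0⟩ := by
    intro a b
    rw [← _root_.map_mul, heis_mul_lag _ _ (hLiso _ a.2 _ b.2)]
    rfl
  have hPleft : ∀ a : ↥L, ρ ⟨(a : (Fin n → F) × (Fin n → F)), 0⟩ * P = P := by
    intro a
    rw [hP, mul_smul_comm, Finset.mul_sum]
    congr 1
    refine Fintype.sum_equiv (Equiv.addLeft a) _ _ ?_
    intro b
    rw [hmul_lag]
    rfl
  have hPright : ∀ a : ↥L, P * ρ ⟨(a : (Fin n → F) × (Fin n → F)), 0⟩ = P := by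
    intro a
    rw [hP, smul_mul_assoc, Finset.sum_mul]
    congr 1
    refine Fintype.sum_equiv (Equiv.addRight a) _ _ ?_
    intro b
    rw [hmul_lag]
    rfl
  have hPfix : ∀ v ∈ fixedByLag ρ L, P v = v := by
    intro v hv
    rw [hP]
    simp only [LinearMap.smul_apply, LinearMap.coe_sum, Finset.sum_apply]
    rw [Finset.sum_congr rfl fun l _ => hv l.1 l.2, Finset.sum_const, Finset.card_univ,
      ← Nat.cast_smul_eq_nsmul ℂ, smul_smul, ← hLcdef, inv_mul_cancel₀ hLc0, one_smul]
  have hPmem : ∀ v : V, P v ∈ fixedByLag ρ L := by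
    intro v
    rw [mem_fixedByLag]
    intro l hl
    have := congrArg (fun f : Module.End ℂ V => f v) (hPleft ⟨l, hl⟩)
    simpa using this
  have hproj : LinearMap.IsProj (fixedByLag ρ L) P := ⟨hPmem, hPfix⟩
  -- the trace of P is nonzero, hence the fixed space is nonzero
  have htrP : LinearMap.trace ℂ V P = Lc⁻¹ * (Module.finrank ℂ V : ℂ) := by
    rw [hP, _root_.map_smul, _root_.map_sum, smul_eq_mul]
    congr 1
    rw [Finset.sum_eq_single (0 : ↥L)]
    · have h0 : ((0 : ↥L) : (Fin n → F) × (Fin n → F)) = 0 := rfl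
      have h1 : (⟨0, 0⟩ : Heis F n) = 1 := rfl
      rw [h0, h1, _root_.map_one, LinearMap.trace_one]
    · intro b _ hb
      exact htr0 _ (by simpa using hb)
    · intro h
      exact absurd (Finset.mem_univ _) h
  have hfro : ((Module.finrank ℂ ↥(fixedByLag ρ L) : ℕ) : ℂ)
      = Lc⁻¹ * (Module.finrank ℂ V : ℂ) := by
    rw [← hproj.trace, htrP]
  have hnz : Module.finrank ℂ ↥(fixedByLag ρ L) ≠ 0 := by
    intro h
    have h0 : Lc⁻¹ * (Module.finrank ℂ V : ℂ) = 0 := by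
      rw [← hfro, h, Nat.cast_zero]
    rcases mul_eq_zero.mp h0 with h' | h'
    · exact hLc0 (inv_eq_zero.mp h')
    · exact hd h'
  have hpbot : fixedByLag ρ L ≠ ⊥ := by
    intro h
    rw [h, finrank_bot] at hnz
    exact hnz rfl
  obtain ⟨v0, hv0mem, hv0⟩ := (Submodule.ne_bot_iff _).mp hpbot
  have hfix0 : ∀ l ∈ L, ρ ⟨l, 0⟩ v0 = v0 := (mem_fixedByLag ρ L v0).mp hv0mem
  -- P ∘ ρ g maps v0 into the line spanned by v0
  have hPrho : ∀ g : Heis F n, ∃ c : ℂ, P (ρ g v0) = c • v0 := by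
    intro g
    by_cases hg : g.w ∈ L
    · refine ⟨χ g.t, ?_⟩
      have e : ρ g v0 = χ g.t • v0 := by
        conv_lhs => rw [show g = (⟨g.w, g.t⟩ : Heis F n) from rfl]
        rw [hsc, LinearMap.smul_apply, hfix0 g.w hg]
      rw [e, _root_.map_smul, hPfix v0 hv0mem]
    · refine ⟨0, ?_⟩
      have hnal : ¬ ∀ l ∈ L, symp l g.w = 0 := fun h =>
        hg (perp_subset L hLdim hLiso _ h)
      push_neg at hnal
      obtain ⟨l0, hl0L, hl0⟩ := hnal
      obtain ⟨c, hc⟩ := hchi _ hl0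
      set l := c • l0 with hldef
      have hlL : l ∈ L := L.smul_mem c hl0L
      have hsl : χ (symp l g.w) ≠ 1 := by rw [hldef, symp_smul_left]; exact hc
      have hgeta : g = ⟨g.w, g.t⟩ := rfl
      have hcomm : ρ ⟨l, 0⟩ * ρ g = χ (symp l g.w) • (ρ g * ρ ⟨l, 0⟩) := by
        conv_lhs => rw [hgeta]
        rw [← _root_.map_mul, heis_comm h2, _root_.map_mul, hcen, smul_mul_assoc,
          one_mul, _root_.map_mul, ← hgeta]
      have key : P (ρ g v0) = χ (symp l g.w) • P (ρ g v0) := by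
        have h1 : P * (ρ ⟨l, 0⟩ * ρ g) = χ (symp l g.w) • (P * (ρ g * ρ ⟨l, 0⟩)) := by
          rw [hcomm, mul_smul_comm]
        rw [← mul_assoc, hPright ⟨l, hlL⟩] at h1
        have h2' := congrArg (fun f : Module.End ℂ V => f v0) h1
        simpa [Module.End.mul_apply, hfix0 l hlL] using h2'
      have hzero : (χ (symp l g.w) - 1) • P (ρ g v0) = 0 := by
        rw [sub_smul, one_smul, ← key, sub_self]
      rcases smul_eq_zero.mp hzero with h | h
      · exact absurd (sub_eq_zero.mp h) hsl
      · rw [h, zero_smul]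
  -- conclude : the fixed space is the line spanned by v0
  have hspan : fixedByLag ρ L = Submodule.span ℂ {v0} := by
    apply le_antisymm
    · intro v hv
      set U : Submodule ℂ V := Submodule.span ℂ (Set.range fun g : Heis F n => ρ g v0)
        with hU
      have hUinv : ∀ g : Heis F n, ∀ x ∈ U, ρ g x ∈ U := by
        intro g x hx
        induction hx using Submodule.span_induction with
        | mem y hy =>
          obtain ⟨h, rfl⟩ := hy
          rw [← Module.End.mul_apply, ← _root_.map_mul]
          exact Submodule.subset_span ⟨g * h, rfl⟩
        | zero => rw [map_zero]; exact U.zero_mem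
        | add x y _ _ hx hy => rw [map_add]; exact U.add_mem hx hy
        | smul c x _ hx => rw [_root_.map_smul]; exact U.smul_mem c hx
      have hUtop : U = ⊤ := by
        rcases hirr.2 U hUinv with h | h
        · exfalso
          have hmem : v0 ∈ U := Submodule.subset_span ⟨1, by simp⟩
          rw [h] at hmem
          exact hv0 ((Submodule.mem_bot ℂ).mp hmem)
        · exact h
      have hvU : v ∈ U := by rw [hUtop]; trivial
      have hPU : ∀ x ∈ U, P x ∈ Submodule.span ℂ {v0} := by
        intro x hx
        induction hx using Submodule.span_induction with
        | mem y hy =>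
          obtain ⟨g, rfl⟩ := hy
          obtain ⟨cg, hcg⟩ := hPrho g
          rw [hcg]
          exact Submodule.smul_mem _ cg (Submodule.mem_span_singleton_self v0)
        | zero => rw [map_zero]; exact Submodule.zero_mem _
        | add x y _ _ hx hy => rw [map_add]; exact Submodule.add_mem _ hx hy
        | smul c x _ hx => rw [_root_.map_smul]; exact Submodule.smul_mem _ c hx
      have := hPU v hvU
      rwa [hPfix v hv] at this
    · rw [Submodule.span_le, Set.singleton_subset_iff]
      exact hv0mem
  rw [hspan]
  exact finrank_span_singleton hv0


end Stmt3
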